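/- For an Appell sequence (A_n), define the generalized reciprocal Appell polynomial Â_{n,k}(x) = x^k · A_n(1/x) for x ≠ 0. Then for all n, k ≥ ℓ ≥ 0, the ℓ-th derivative satisfies d^ℓ/dx^ℓ Â_{n,k}(x) = ℓ! · Σ_{ν=0}^ℓ (-1)^ν · C(k-ν, k-ℓ) · C(n,ν) · Â_{n-ν, k-ℓ-ν}(x). -/

import Mathlib

open Finset

lemma identI : ∀ (ℓ : ℕ), ∀ (K j : ℕ), ℓ ≤ K →
    (∏ i ∈ range ℓ, ((K : ℤ) - j - i)) =
      (ℓ.factorial : ℤ) * ∑ ν ∈ range (ℓ + 1),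
        (-1) ^ ν * ((K - ν).choose (K - ℓ) : ℤ) * (j.choose ν : ℤ) := by
  intro ℓ
  induction ℓ with
  | zero => intro K j _; simp [Nat.choose_self]
  | succ ℓ ih =>
    intro K j hK
    induction j with
    | zero =>
      have h1 : ∀ i ∈ range (ℓ + 1), ((K : ℤ) - (0:ℕ) - i) = ((K - i : ℕ) : ℤ) := by
        intro i hi
        have : i ≤ K := le_trans (Nat.le_of_lt_succ (mem_range.mp hi)) (le_trans (Nat.le_succ ℓ) hK)
        push_cast [Nat.cast_sub this]; ring
      rw [Finset.prod_congr rfl h1, ← Nat.cast_prod, ← Nat.descFactorial_eq_prod_range,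
        Nat.descFactorial_eq_factorial_mul_choose]
      have h2 : ∑ ν ∈ range (ℓ + 1 + 1),
          (-1 : ℤ) ^ ν * ((K - ν).choose (K - (ℓ+1)) : ℤ) * ((0:ℕ).choose ν : ℤ)
          = ((K).choose (K - (ℓ+1)) : ℤ) := by
        rw [Finset.sum_eq_single 0]
        · simp
        · intro b _ hb
          have : (0:ℕ).choose b = 0 := by
            cases b with
            | zero => exact absurd rfl hb
            | succ b => simp [Nat.choose_eq_zero_of_lt]
          simp [this]
        · simp
      rw [h2, Nat.choose_symm hK]
      push_cast; ring
    | succ j hj =>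
      -- abbreviations
      have hK1 : ℓ ≤ K - 1 := by omega
      have ihm := ih (K - 1) j hK1
      -- LHS recurrences
      have hfac : ∀ i : ℕ, ((K : ℤ) - (j+1:ℕ) - i) = (((K-1:ℕ) : ℤ) - j - i) := by
        intro i; have : (1:ℕ) ≤ K := by omega
        push_cast [Nat.cast_sub this]; ring
      have eL1 : (∏ i ∈ range (ℓ + 1), ((K : ℤ) - (j+1:ℕ) - i))
          = (∏ i ∈ range ℓ, (((K-1:ℕ) : ℤ) - j - i)) * (((K-1:ℕ) : ℤ) - j - ℓ) := by
        rw [Finset.prod_range_succ, Finset.prod_congr rfl (fun i _ => hfac i), hfac ℓ]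
      have eL2 : (∏ i ∈ range (ℓ + 1), ((K : ℤ) - j - i))
          = (∏ i ∈ range ℓ, (((K-1:ℕ) : ℤ) - j - i)) * ((K : ℤ) - j) := by
        rw [Finset.prod_range_succ']
        congr 1
        · apply Finset.prod_congr rfl
          intro i _; have : (1:ℕ) ≤ K := by omega
          push_cast [Nat.cast_sub this]; ring
        · push_cast; ring
      -- RHS recurrence
      have eR : ∑ ν ∈ range (ℓ + 1 + 1),
            (-1:ℤ) ^ ν * ((K - ν).choose (K - (ℓ+1)) : ℤ) * ((j+1).choose ν : ℤ)
          = (∑ ν ∈ range (ℓ + 1 + 1),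
            (-1:ℤ) ^ ν * ((K - ν).choose (K - (ℓ+1)) : ℤ) * (j.choose ν : ℤ))
          - ∑ ν ∈ range (ℓ + 1),
            (-1:ℤ) ^ ν * (((K-1) - ν).choose ((K-1) - ℓ) : ℤ) * (j.choose ν : ℤ) := by
        rw [Finset.sum_range_succ' (fun ν => (-1:ℤ) ^ ν * ((K - ν).choose (K - (ℓ+1)) : ℤ) * ((j+1).choose ν : ℤ)),
            Finset.sum_range_succ' (fun ν => (-1:ℤ) ^ ν * ((K - ν).choose (K - (ℓ+1)) : ℤ) * (j.choose ν : ℤ))]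
        have hterm : ∀ i ∈ range (ℓ + 1),
            (-1:ℤ) ^ (i+1) * ((K - (i+1)).choose (K - (ℓ+1)) : ℤ) * ((j+1).choose (i+1) : ℤ)
            = (-1:ℤ) ^ (i+1) * ((K - (i+1)).choose (K - (ℓ+1)) : ℤ) * (j.choose (i+1) : ℤ)
              - (-1:ℤ) ^ i * (((K-1) - i).choose ((K-1) - ℓ) : ℤ) * (j.choose i : ℤ) := by
          intro i _
          have h1 : K - (i+1) = (K-1) - i := by omega
          have h2 : K - (ℓ+1) = (K-1) - ℓ := by omega
          rw [Nat.choose_succ_succ', h1, h2]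
          push_cast; ring
        rw [Finset.sum_congr rfl hterm, Finset.sum_sub_distrib]
        simp only [Nat.choose_zero_right]
        push_cast; ring
      rw [eL1, eR]
      rw [eL2] at hj
      have hc : ((K - 1 : ℕ) : ℤ) = (K : ℤ) - 1 := by omega
      have hfac2 : (((ℓ+1).factorial : ℕ) : ℤ) = ((ℓ : ℤ) + 1) * (ℓ.factorial : ℤ) := by
        push_cast [Nat.factorial_succ]; ring
      rw [hfac2] at hj ⊢
      linear_combination hj - ((ℓ : ℤ) + 1) * ihm +
        (∏ i ∈ range ℓ, (((K - 1 : ℕ) : ℤ) - (j : ℤ) - (i : ℤ))) * hc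

lemma iterB (c : ℕ → ℂ) (m : ℕ) (K : ℤ) (F : ℂ → ℂ)
    (hF : ∀ y : ℂ, y ≠ 0 → F y = ∑ ν ∈ range m, c ν * y ^ (K - ν)) :
    ∀ (ℓ : ℕ) (x : ℂ), x ≠ 0 →
      deriv^[ℓ] F x = ∑ ν ∈ range m,
        c ν * (∏ i ∈ range ℓ, ((K : ℂ) - ν - i)) * x ^ (K - ν - ℓ) := by
  intro ℓ
  induction ℓ with
  | zero =>
    intro x hx
    simpa using hF x hx
  | succ ℓ ih =>
    intro x hx
    rw [Function.iterate_succ_apply']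
    have hev : deriv^[ℓ] F =ᶠ[nhds x]
        fun y => ∑ ν ∈ range m, c ν * (∏ i ∈ range ℓ, ((K : ℂ) - ν - i)) * y ^ (K - ν - ℓ) := by
      filter_upwards [compl_singleton_mem_nhds hx] with y hy
      exact ih y hy
    rw [hev.deriv_eq]
    rw [deriv_fun_sum (fun ν _ => by
      exact ((differentiableAt_zpow.mpr (Or.inl hx)).const_mul _))]
    refine Finset.sum_congr rfl fun ν _ => ?_
    rw [deriv_const_mul _ (differentiableAt_zpow.mpr (Or.inl hx)), deriv_zpow]
    rw [Finset.prod_range_succ]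
    have he : K - ν - ℓ - 1 = K - ν - (ℓ + 1 : ℕ) := by push_cast; ring
    rw [he]
    push_cast
    ring

theorem generalized_reciprocal_appell_deriv (α : ℕ → ℂ) (A : ℕ → ℂ → ℂ)
    (hA : ∀ n x, A n x =
      ∑ ν ∈ Finset.range (n + 1), (n.choose ν : ℂ) * α (n - ν) * x ^ ν)
    (n k ℓ : ℕ) (hn : ℓ ≤ n) (hk : ℓ ≤ k) (x : ℂ) (hx : x ≠ 0) :
    iteratedDeriv ℓ (fun y => y ^ (k : ℤ) * A n y⁻¹) x =
      (ℓ.factorial : ℂ) * ∑ ν ∈ Finset.range (ℓ + 1),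
        (-1) ^ ν * ((k - ν).choose (k - ℓ) : ℂ) * (n.choose ν : ℂ) *
          (x ^ ((k : ℤ) - (ℓ : ℤ) - (ν : ℤ)) * A (n - ν) x⁻¹) := by
  have hzpow : ∀ (y : ℂ), y ≠ 0 → ∀ (M : ℤ) (μ : ℕ),
      y ^ M * (y⁻¹) ^ μ = y ^ (M - μ) := by
    intro y hy M μ
    rw [← zpow_natCast y⁻¹, inv_zpow, ← zpow_neg, ← zpow_add₀ hy, sub_eq_add_neg]
  -- LHS
  have h1 : ∀ y : ℂ, y ≠ 0 → (fun y => y ^ (k : ℤ) * A n y⁻¹) y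
      = ∑ ν ∈ range (n + 1), ((n.choose ν : ℂ) * α (n - ν)) * y ^ ((k : ℤ) - ν) := by
    intro y hy
    simp only
    rw [hA n y⁻¹, Finset.mul_sum]
    refine Finset.sum_congr rfl fun ν _ => ?_
    rw [← hzpow y hy (k : ℤ) ν]
    ring
  rw [iteratedDeriv_eq_iterate,
    iterB (fun ν => (n.choose ν : ℂ) * α (n - ν)) (n + 1) k _ h1 ℓ x hx]
  -- RHS : expand per ν
  have inner : ∀ ν : ℕ, ν ≤ ℓ →
      (x ^ ((k : ℤ) - ℓ - ν) * A (n - ν) x⁻¹) * (n.choose ν : ℂ)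
      = ∑ j ∈ range (n + 1),
          ((n.choose j : ℂ) * (j.choose ν : ℂ)) * (α (n - j) * x ^ ((k : ℤ) - ℓ - j)) := by
    intro ν hνℓ
    have hνn : ν ≤ n := le_trans hνℓ hn
    have e1 : (x ^ ((k : ℤ) - ℓ - ν) * A (n - ν) x⁻¹) * (n.choose ν : ℂ)
        = ∑ μ ∈ range (n - ν + 1),
            ((n.choose ν : ℂ) * ((n - ν).choose μ : ℂ)) *
              (α (n - (ν + μ)) * x ^ ((k : ℤ) - ℓ - (ν + μ))) := by
      rw [hA (n - ν) x⁻¹, Finset.mul_sum, Finset.sum_mul]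
      refine Finset.sum_congr rfl fun μ _ => ?_
      have hxp : x ^ ((k : ℤ) - ℓ - ν) * (x⁻¹) ^ μ = x ^ ((k : ℤ) - ℓ - (ν + μ)) := by
        rw [hzpow x hx _ μ]
        congr 1; ring
      have hsub : n - ν - μ = n - (ν + μ) := by omega
      rw [← hxp, hsub]
      ring
    rw [e1]
    -- reindex μ ↦ ν + μ
    have e2 : ∑ μ ∈ range (n - ν + 1),
          ((n.choose ν : ℂ) * ((n - ν).choose μ : ℂ)) *
            (α (n - (ν + μ)) * x ^ ((k : ℤ) - ℓ - (ν + μ)))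
        = ∑ j ∈ Ico ν (n + 1),
          ((n.choose ν : ℂ) * ((n - ν).choose (j - ν) : ℂ)) *
            (α (n - j) * x ^ ((k : ℤ) - ℓ - j)) := by
      refine Finset.sum_nbij' (fun μ => ν + μ) (fun j => j - ν) ?_ ?_ ?_ ?_ ?_
      · intro a ha; simp only [mem_range] at ha; simp only [mem_Ico]; omega
      · intro a ha; simp only [mem_Ico] at ha; simp only [mem_range]; omega
      · intro a _; show ν + a - ν = a; omega
      · intro a ha; simp only [mem_Ico] at ha; show ν + (a - ν) = a; omega
      · intro a _; simp [Nat.add_sub_cancel_left]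
    rw [e2]
    -- trinomial revision
    have e3 : ∀ j ∈ Ico ν (n + 1),
        ((n.choose ν : ℂ) * ((n - ν).choose (j - ν) : ℂ)) *
            (α (n - j) * x ^ ((k : ℤ) - ℓ - j))
        = ((n.choose j : ℂ) * (j.choose ν : ℂ)) * (α (n - j) * x ^ ((k : ℤ) - ℓ - j)) := by
      intro j hj
      simp only [mem_Ico] at hj
      have := Nat.choose_mul (n := n) (show ν ≤ j from hj.1)
      congr 1
      exact_mod_cast this.symm
    rw [Finset.sum_congr rfl e3]
    -- extend Ico ν (n+1) to range (n+1)
    refine Finset.sum_subset ?_ ?_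
    · intro j hj; simp only [mem_Ico] at hj; simp only [mem_range]; omega
    · intro j hjr hj
      simp only [mem_range] at hjr
      simp only [mem_Ico, not_and, not_le] at hj
      have : j < ν := by omega
      simp [Nat.choose_eq_zero_of_lt this]
  -- assemble RHS
  have hR : ∑ ν ∈ range (ℓ + 1),
        (-1 : ℂ) ^ ν * ((k - ν).choose (k - ℓ) : ℂ) * (n.choose ν : ℂ) *
          (x ^ ((k : ℤ) - ℓ - ν) * A (n - ν) x⁻¹)
      = ∑ j ∈ range (n + 1), ∑ ν ∈ range (ℓ + 1),
          ((-1 : ℂ) ^ ν * ((k - ν).choose (k - ℓ) : ℂ)) *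
            (((n.choose j : ℂ) * (j.choose ν : ℂ)) * (α (n - j) * x ^ ((k : ℤ) - ℓ - j))) := by
    rw [Finset.sum_comm]
    refine Finset.sum_congr rfl fun ν hν => ?_
    have hνℓ : ν ≤ ℓ := Nat.lt_succ_iff.mp (mem_range.mp hν)
    have : (-1 : ℂ) ^ ν * ((k - ν).choose (k - ℓ) : ℂ) * (n.choose ν : ℂ) *
          (x ^ ((k : ℤ) - ℓ - ν) * A (n - ν) x⁻¹)
        = ((-1 : ℂ) ^ ν * ((k - ν).choose (k - ℓ) : ℂ)) *
          ((x ^ ((k : ℤ) - ℓ - ν) * A (n - ν) x⁻¹) * (n.choose ν : ℂ)) := by ring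
    rw [this, inner ν hνℓ, Finset.mul_sum]
  rw [hR, Finset.mul_sum]
  -- per j comparison using identI
  refine Finset.sum_congr rfl fun j hj => ?_
  have hprod : (∏ i ∈ range ℓ, (((k : ℤ) : ℂ) - j - i))
      = (ℓ.factorial : ℂ) * ∑ ν ∈ range (ℓ + 1),
          (-1 : ℂ) ^ ν * ((k - ν).choose (k - ℓ) : ℂ) * (j.choose ν : ℂ) := by
    have h := identI ℓ k j hk
    calc (∏ i ∈ range ℓ, (((k : ℤ) : ℂ) - j - i))
        = ((∏ i ∈ range ℓ, ((k : ℤ) - j - i) : ℤ) : ℂ) := by push_cast; ring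
      _ = _ := by rw [h]; push_cast; ring
  have hexp : (k : ℤ) - j - ℓ = (k : ℤ) - ℓ - j := by ring
  rw [hexp, hprod]
  simp only [Finset.mul_sum, Finset.sum_mul]
  refine Finset.sum_congr rfl fun ν _ => by ring
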